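/- Let G be a finite non-abelian group with m(G) < k(G) - 1. Then G is a rational group. -/

import Mathlib

/-- `kClasses G` is the number of conjugacy classes of `G`. -/
noncomputable def kClasses (G : Type*) [Group G] : ℕ := Nat.card (ConjClasses G)

/-- `mVal G` is the least positive integer `n` such that the union of any `n` distinct
non-trivial conjugacy classes of `G` together with the identity of `G` is a subgroup of `G`. -/
noncomputable def mVal (G : Type*) [Group G] : ℕ :=
  sInf {n : ℕ | 0 < n ∧ ∀ S : Finset (ConjClasses G),
    S.card = n → (∀ c ∈ S, c ≠ ConjClasses.mk (1 : G)) →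
    ∃ H : Subgroup G, (H : Set G) = insert (1 : G) (⋃ c ∈ S, c.carrier)}


theorem stmt_7 (G : Type*) [Group G] [Finite G]
    (hna : ¬ ∀ a b : G, a * b = b * a) (h : mVal G < kClasses G - 1) :
    ∀ (x : G) (m : ℕ), Nat.Coprime m (orderOf x) → IsConj x (x ^ m) := by
  classical
  have : Fintype G := Fintype.ofFinite G
  have : Fintype (ConjClasses G) := Fintype.ofFinite _
  set k := kClasses G with hk
  have hkcard : k = Fintype.card (ConjClasses G) := by
    rw [hk, kClasses, Nat.card_eq_fintype_card]
  have hk1 : 0 < k - 1 := (Nat.zero_le _).trans_lt h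
  -- the set of all nontrivial conjugacy classes
  set A : Finset (ConjClasses G) := Finset.univ \ {ConjClasses.mk (1 : G)} with hA
  have hAcard : A.card = k - 1 := by
    rw [hA, Finset.card_sdiff_of_subset (by simp), hkcard]; simp
  set P : Set ℕ := {n : ℕ | 0 < n ∧ ∀ S : Finset (ConjClasses G),
    S.card = n → (∀ c ∈ S, c ≠ ConjClasses.mk (1 : G)) →
    ∃ H : Subgroup G, (H : Set G) = insert (1 : G) (⋃ c ∈ S, c.carrier)} with hP
  -- P is nonempty: n = k - 1 works
  have hPne : P.Nonempty := by
    refine ⟨k - 1, hk1, fun S hScard hSne => ?_⟩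
    have hSA : S = A := by
      refine Finset.eq_of_subset_of_card_le (fun c hc => ?_) (by rw [hAcard, hScard])
      simp [hA, hSne c hc]
    refine ⟨⊤, ?_⟩
    ext g
    simp only [Subgroup.coe_top, Set.mem_univ, true_iff, Set.mem_insert_iff,
      Set.mem_iUnion]
    by_cases hg : g = 1
    · exact Or.inl hg
    · refine Or.inr ⟨ConjClasses.mk g, ?_, ConjClasses.mem_carrier_mk⟩
      simp only [hSA, hA, Finset.mem_sdiff, Finset.mem_univ, Finset.mem_singleton, true_and]
      intro hgc
      exact hg (isConj_one_left.mp (ConjClasses.mk_eq_mk_iff_isConj.mp hgc))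
  have hmem : mVal G ∈ P := Nat.sInf_mem hPne
  obtain ⟨hnpos, hall⟩ := hmem
  set n := mVal G with hn
  intro x m hcop
  by_cases hx : x = 1
  · subst hx; simp
  by_cases hconj : ConjClasses.mk x = ConjClasses.mk (x ^ m)
  · exact ConjClasses.mk_eq_mk_iff_isConj.mp hconj
  exfalso
  have hxm : x ^ m ≠ 1 := by
    intro h1
    have := hcop.symm.orderOf_pow (y := x) (m := m)
    rw [h1, orderOf_one] at this
    exact hx (orderOf_eq_one_iff.mp this.symm)
  -- the pool: nontrivial classes other than mk (x^m)
  set B : Finset (ConjClasses G) := A \ {ConjClasses.mk (x ^ m)} with hB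
  have hmkx1 : ConjClasses.mk x ≠ ConjClasses.mk (1 : G) := fun hc =>
    hx (isConj_one_left.mp (ConjClasses.mk_eq_mk_iff_isConj.mp hc))
  have hmkxm1 : ConjClasses.mk (x ^ m) ≠ ConjClasses.mk (1 : G) := fun hc =>
    hxm (isConj_one_left.mp (ConjClasses.mk_eq_mk_iff_isConj.mp hc))
  have hxB : ConjClasses.mk x ∈ B := by
    simp [hB, hA, hmkx1, hconj]
  have hBcard : B.card = k - 2 := by
    rw [hB, Finset.card_sdiff_of_subset (by simp [hA, hmkxm1]), hAcard, Finset.card_singleton]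
    omega
  have hnB : n ≤ B.card := by rw [hBcard]; omega
  obtain ⟨S, hxS, hSB, hScard⟩ := Finset.exists_subsuperset_card_eq
    (Finset.singleton_subset_iff.mpr hxB) (by simpa using Nat.succ_le_of_lt hnpos) hnB
  have hSne : ∀ c ∈ S, c ≠ ConjClasses.mk (1 : G) := by
    intro c hc
    have := hSB hc
    simp only [hB, hA, Finset.mem_sdiff, Finset.mem_univ, Finset.mem_singleton, true_and] at this
    exact this.1
  obtain ⟨H, hH⟩ := hall S hScard hSne
  have hxH : x ∈ H := by
    rw [← SetLike.mem_coe, hH]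
    exact Set.mem_insert_iff.mpr (Or.inr (Set.mem_biUnion
      (Finset.singleton_subset_iff.mp hxS) ConjClasses.mem_carrier_mk))
  have hxmH : x ^ m ∈ H := pow_mem hxH m
  rw [← SetLike.mem_coe, hH, Set.mem_insert_iff] at hxmH
  rcases hxmH with h1 | h2
  · exact hxm h1
  · obtain ⟨c, hcS, hcmem⟩ := Set.mem_iUnion₂.mp h2
    have hc : ConjClasses.mk (x ^ m) = c := ConjClasses.mem_carrier_iff_mk_eq.mp hcmem
    have := hSB hcS
    rw [← hc] at this
    simp [hB] at this
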